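/- If u and v are orthogonal twin-harmonics on an open set Ω ⊆ ℝ^N, then the pair (u² − v², 2uv) are orthogonal twin-harmonics on Ω. -/

import Mathlib

noncomputable section

/-- The partial derivative `∂f/∂xᵢ` of a function on `ℝ^N`. -/
noncomputable def pd {N : ℕ} (f : (Fin N → ℝ) → ℝ) (i : Fin N) (x : Fin N → ℝ) : ℝ :=
  fderiv ℝ f x (Pi.single i 1)

/-- The Laplacian `Δf = Σᵢ ∂²f/∂xᵢ²`. -/
noncomputable def lap {N : ℕ} (f : (Fin N → ℝ) → ℝ) (x : Fin N → ℝ) : ℝ :=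
  ∑ i, pd (pd f i) i x

/-- The ∞-Laplacian `Δ_∞ f = Σᵢⱼ (∂f/∂xᵢ)(∂f/∂xⱼ)(∂²f/∂xᵢ∂xⱼ)`. -/
noncomputable def infLap {N : ℕ} (f : (Fin N → ℝ) → ℝ) (x : Fin N → ℝ) : ℝ :=
  ∑ i, ∑ j, pd f i x * pd f j x * pd (pd f j) i x

/-- The 1-Laplacian `Δ₁f = |∇f|²Δf − Δ_∞f`. -/
noncomputable def lap1 {N : ℕ} (f : (Fin N → ℝ) → ℝ) (x : Fin N → ℝ) : ℝ :=
  (∑ i, pd f i x ^ 2) * lap f x - infLap f x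

/-- A C² function is perfectly harmonic on `Ω` if `Δf = 0` and `Δ_∞ f = 0` on `Ω`. -/
def PerfectlyHarmonic {N : ℕ} (f : (Fin N → ℝ) → ℝ) (Ω : Set (Fin N → ℝ)) : Prop :=
  ContDiffOn ℝ 2 f Ω ∧ ∀ x ∈ Ω, lap f x = 0 ∧ infLap f x = 0

/-- Two C² functions `u, v` are orthogonal twin-harmonics on `Ω` if at every point of `Ω`:
`v·Δu = u·Δv`, `v·Δ_∞u = u·Δ_∞v`, `|∇u|² = |∇v|²`, and `∇u·∇v = 0`. -/
def TwinHarmonics {N : ℕ} (u v : (Fin N → ℝ) → ℝ) (Ω : Set (Fin N → ℝ)) : Prop :=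
  ContDiffOn ℝ 2 u Ω ∧ ContDiffOn ℝ 2 v Ω ∧ ∀ x ∈ Ω,
    v x * lap u x = u x * lap v x ∧
    v x * infLap u x = u x * infLap v x ∧
    (∑ i, pd u i x ^ 2) = (∑ i, pd v i x ^ 2) ∧
    (∑ i, pd u i x * pd v i x) = 0



variable {N : ℕ}

lemma pd_congr_on {f g : (Fin N → ℝ) → ℝ} {s : Set (Fin N → ℝ)} (hs : IsOpen s)
    (h : ∀ y ∈ s, f y = g y) {x} (hx : x ∈ s) (i : Fin N) : pd f i x = pd g i x := by
  unfold pd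
  rw [Filter.EventuallyEq.fderiv_eq (Filter.eventuallyEq_of_mem (hs.mem_nhds hx) h)]

lemma pd_mul {f g : (Fin N → ℝ) → ℝ} {x} (hf : DifferentiableAt ℝ f x)
    (hg : DifferentiableAt ℝ g x) (i : Fin N) :
    pd (fun y => f y * g y) i x = pd f i x * g x + f x * pd g i x := by
  unfold pd
  rw [fderiv_fun_mul hf hg]
  simp only [ContinuousLinearMap.add_apply, ContinuousLinearMap.smul_apply, smul_eq_mul]
  ring

lemma pd_sub {f g : (Fin N → ℝ) → ℝ} {x} (hf : DifferentiableAt ℝ f x)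
    (hg : DifferentiableAt ℝ g x) (i : Fin N) :
    pd (fun y => f y - g y) i x = pd f i x - pd g i x := by
  unfold pd
  rw [fderiv_fun_sub hf hg]; simp

lemma pd_const_mul {f : (Fin N → ℝ) → ℝ} {x} (hf : DifferentiableAt ℝ f x) (c : ℝ) (i : Fin N) :
    pd (fun y => c * f y) i x = c * pd f i x := by
  unfold pd
  rw [fderiv_const_mul hf]; simp

lemma pd_add {f g : (Fin N → ℝ) → ℝ} {x} (hf : DifferentiableAt ℝ f x)
    (hg : DifferentiableAt ℝ g x) (i : Fin N) :
    pd (fun y => f y + g y) i x = pd f i x + pd g i x := by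
  unfold pd
  rw [fderiv_fun_add hf hg]; simp

lemma pd_sum {ι : Type*} (s : Finset ι) {f : ι → (Fin N → ℝ) → ℝ} {x}
    (hf : ∀ i ∈ s, DifferentiableAt ℝ (f i) x) (i : Fin N) :
    pd (fun y => ∑ j ∈ s, f j y) i x = ∑ j ∈ s, pd (f j) i x := by
  unfold pd
  rw [fderiv_fun_sum hf]; simp

lemma pd_zero_fun (x : Fin N → ℝ) (i : Fin N) : pd (fun _ => (0:ℝ)) i x = 0 := by
  unfold pd
  rw [fderiv_fun_const]; simp

lemma diffAt_of_c2 {f : (Fin N → ℝ) → ℝ} {Ω : Set (Fin N → ℝ)} (hΩ : IsOpen Ω)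
    (hf : ContDiffOn ℝ 2 f Ω) {x} (hx : x ∈ Ω) : DifferentiableAt ℝ f x :=
  ((hf.contDiffAt (hΩ.mem_nhds hx)).differentiableAt (by norm_num))

lemma diffAt_pd_of_c2 {f : (Fin N → ℝ) → ℝ} {Ω : Set (Fin N → ℝ)} (hΩ : IsOpen Ω)
    (hf : ContDiffOn ℝ 2 f Ω) {x} (hx : x ∈ Ω) (i : Fin N) :
    DifferentiableAt ℝ (pd f i) x := by
  have h := (hf.contDiffAt (hΩ.mem_nhds hx)).fderiv_right (m := 1) (by norm_num)
  exact (h.differentiableAt (by norm_num)).clm_apply (differentiableAt_const _)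

section expand

variable {u v : (Fin N → ℝ) → ℝ} {Ω : Set (Fin N → ℝ)}

lemma E_pdU (hΩ : IsOpen Ω) (hu : ContDiffOn ℝ 2 u Ω) (hv : ContDiffOn ℝ 2 v Ω) :
    ∀ x ∈ Ω, ∀ i, pd (fun y => u y ^ 2 - v y ^ 2) i x
      = 2*u x*pd u i x - 2*v x*pd v i x := by
  intro x hx i
  have hu' := diffAt_of_c2 hΩ hu hx
  have hv' := diffAt_of_c2 hΩ hv hx
  rw [show (fun y => u y ^ 2 - v y ^ 2) = (fun y => u y * u y - v y * v y) from
    funext fun y => by ring, pd_sub (hu'.fun_mul hu') (hv'.fun_mul hv'),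
    pd_mul hu' hu', pd_mul hv' hv']
  ring

lemma E_pdV (hΩ : IsOpen Ω) (hu : ContDiffOn ℝ 2 u Ω) (hv : ContDiffOn ℝ 2 v Ω) :
    ∀ x ∈ Ω, ∀ i, pd (fun y => 2 * u y * v y) i x
      = 2*v x*pd u i x + 2*u x*pd v i x := by
  intro x hx i
  have hu' := diffAt_of_c2 hΩ hu hx
  have hv' := diffAt_of_c2 hΩ hv hx
  rw [show (fun y => 2 * u y * v y) = (fun y => (2:ℝ) * (u y * v y)) from
    funext fun y => by ring, pd_const_mul (hu'.fun_mul hv') 2, pd_mul hu' hv']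
  ring

lemma E_pdpdU (hΩ : IsOpen Ω) (hu : ContDiffOn ℝ 2 u Ω) (hv : ContDiffOn ℝ 2 v Ω) :
    ∀ x ∈ Ω, ∀ i j, pd (pd (fun y => u y ^ 2 - v y ^ 2) j) i x
      = 2*(pd u i x * pd u j x + u x * pd (pd u j) i x
          - pd v i x * pd v j x - v x * pd (pd v j) i x) := by
  intro x hx i j
  have hu' := diffAt_of_c2 hΩ hu hx
  have hv' := diffAt_of_c2 hΩ hv hx
  have hu'' := diffAt_pd_of_c2 hΩ hu hx j
  have hv'' := diffAt_pd_of_c2 hΩ hv hx j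
  have step : pd (pd (fun y => u y ^ 2 - v y ^ 2) j) i x
      = pd (fun y => (2:ℝ) * (u y * pd u j y) - (2:ℝ) * (v y * pd v j y)) i x :=
    pd_congr_on hΩ (fun y hy => by rw [E_pdU hΩ hu hv y hy j]; ring) hx i
  rw [step, pd_sub ((hu'.fun_mul hu'').const_mul 2) ((hv'.fun_mul hv'').const_mul 2),
    pd_const_mul (hu'.fun_mul hu'') 2, pd_const_mul (hv'.fun_mul hv'') 2,
    pd_mul hu' hu'', pd_mul hv' hv'']
  ring

lemma E_pdpdV (hΩ : IsOpen Ω) (hu : ContDiffOn ℝ 2 u Ω) (hv : ContDiffOn ℝ 2 v Ω) :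
    ∀ x ∈ Ω, ∀ i j, pd (pd (fun y => 2 * u y * v y) j) i x
      = 2*(pd v i x * pd u j x + pd u i x * pd v j x
          + v x * pd (pd u j) i x + u x * pd (pd v j) i x) := by
  intro x hx i j
  have hu' := diffAt_of_c2 hΩ hu hx
  have hv' := diffAt_of_c2 hΩ hv hx
  have hu'' := diffAt_pd_of_c2 hΩ hu hx j
  have hv'' := diffAt_pd_of_c2 hΩ hv hx j
  have step : pd (pd (fun y => 2 * u y * v y) j) i x
      = pd (fun y => (2:ℝ) * (v y * pd u j y) + (2:ℝ) * (u y * pd v j y)) i x :=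
    pd_congr_on hΩ (fun y hy => by rw [E_pdV hΩ hu hv y hy j]; ring) hx i
  rw [step, pd_add ((hv'.fun_mul hu'').const_mul 2) ((hu'.fun_mul hv'').const_mul 2),
    pd_const_mul (hv'.fun_mul hu'') 2, pd_const_mul (hu'.fun_mul hv'') 2,
    pd_mul hv' hu'', pd_mul hu' hv'']
  ring

lemma E_hd1 (hΩ : IsOpen Ω) (hu : ContDiffOn ℝ 2 u Ω) (hv : ContDiffOn ℝ 2 v Ω)
    (hcon : ∀ y ∈ Ω, (∑ k, pd u k y ^ 2) = ∑ k, pd v k y ^ 2) :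
    ∀ x ∈ Ω, ∀ i, (∑ j, pd u j x * pd (pd u j) i x) = ∑ j, pd v j x * pd (pd v j) i x := by
  intro x hx i
  have e : ∀ (w : (Fin N → ℝ) → ℝ), ContDiffOn ℝ 2 w Ω →
      pd (fun y => ∑ k, pd w k y ^ 2) i x
      = ∑ j, (pd (pd w j) i x * pd w j x + pd w j x * pd (pd w j) i x) := by
    intro w hw
    rw [show (fun y => ∑ k, pd w k y ^ 2) = (fun y => ∑ k, pd w k y * pd w k y) from
      funext fun y => Finset.sum_congr rfl fun k _ => by ring,
      pd_sum Finset.univ (fun j _ => (diffAt_pd_of_c2 hΩ hw hx j).fun_mul (diffAt_pd_of_c2 hΩ hw hx j)) i]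
    exact Finset.sum_congr rfl fun j _ =>
      pd_mul (diffAt_pd_of_c2 hΩ hw hx j) (diffAt_pd_of_c2 hΩ hw hx j) i
  have key : (∑ j, (pd (pd u j) i x * pd u j x + pd u j x * pd (pd u j) i x))
      = ∑ j, (pd (pd v j) i x * pd v j x + pd v j x * pd (pd v j) i x) := by
    rw [← e u hu, ← e v hv]
    exact pd_congr_on hΩ hcon hx i
  have key2 : 2 * (∑ j, pd u j x * pd (pd u j) i x)
      = 2 * (∑ j, pd v j x * pd (pd v j) i x) := by
    rw [Finset.mul_sum, Finset.mul_sum,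
      Finset.sum_congr rfl (fun j _ => show 2 * (pd u j x * pd (pd u j) i x)
        = pd (pd u j) i x * pd u j x + pd u j x * pd (pd u j) i x from by ring),
      Finset.sum_congr (rfl : (Finset.univ : Finset (Fin N)) = Finset.univ)
        (fun j _ => show 2 * (pd v j x * pd (pd v j) i x)
        = pd (pd v j) i x * pd v j x + pd v j x * pd (pd v j) i x from by ring)]
    exact key
  exact mul_left_cancel₀ two_ne_zero key2

lemma E_hd2 (hΩ : IsOpen Ω) (hu : ContDiffOn ℝ 2 u Ω) (hv : ContDiffOn ℝ 2 v Ω)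
    (hcon : ∀ y ∈ Ω, (∑ k, pd u k y * pd v k y) = 0) :
    ∀ x ∈ Ω, ∀ i, (∑ j, pd v j x * pd (pd u j) i x) + (∑ j, pd u j x * pd (pd v j) i x) = 0 := by
  intro x hx i
  have e : pd (fun y => ∑ k, pd u k y * pd v k y) i x
      = ∑ j, (pd (pd u j) i x * pd v j x + pd u j x * pd (pd v j) i x) := by
    rw [pd_sum Finset.univ (fun j _ => (diffAt_pd_of_c2 hΩ hu hx j).fun_mul (diffAt_pd_of_c2 hΩ hv hx j)) i]
    exact Finset.sum_congr rfl fun j _ =>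
      pd_mul (diffAt_pd_of_c2 hΩ hu hx j) (diffAt_pd_of_c2 hΩ hv hx j) i
  have key : (∑ j, (pd (pd u j) i x * pd v j x + pd u j x * pd (pd v j) i x)) = 0 := by
    rw [← e, pd_congr_on hΩ hcon hx i, pd_zero_fun]
  rw [← key, Finset.sum_add_distrib]
  congr 1
  exact Finset.sum_congr rfl fun j _ => by ring

end expand


lemma alg_main {N : ℕ} (a b : Fin N → ℝ) (A B : Fin N → Fin N → ℝ) (p q : ℝ)
    (hq : ∑ i, a i^2 = ∑ i, b i^2)
    (hab : ∑ i, a i * b i = 0)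
    (h1 : ∀ i, ∑ j, a j * A i j = ∑ j, b j * B i j)
    (h2 : ∀ i, (∑ j, b j * A i j) + (∑ j, a j * B i j) = 0)
    (hlap : q * (∑ i, A i i) = p * (∑ i, B i i))
    (hinf : q * (∑ i, ∑ j, a i * a j * A i j) = p * (∑ i, ∑ j, b i * b j * B i j)) :
    ((2*p*q) * (∑ i, (2*(a i*a i + p*A i i - b i*b i - q*B i i)))
      = (p^2-q^2) * (∑ i, (2*(b i*a i + a i*b i + q*A i i + p*B i i)))) ∧
    ((2*p*q) * (∑ i, ∑ j, (2*p*a i - 2*q*b i) * (2*p*a j - 2*q*b j) *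
        (2*(a i*a j + p*A i j - b i*b j - q*B i j)))
      = (p^2-q^2) * (∑ i, ∑ j, (2*q*a i + 2*p*b i) * (2*q*a j + 2*p*b j) *
        (2*(b i*a j + a i*b j + q*A i j + p*B i j)))) ∧
    ((∑ i, (2*p*a i - 2*q*b i)^2) = ∑ i, (2*q*a i + 2*p*b i)^2) ∧
    (∑ i, (2*p*a i - 2*q*b i) * (2*q*a i + 2*p*b i)) = 0 := by
  refine ⟨?_, ?_, ?_, ?_⟩
  · -- laplacian identity
    have e1 : ∑ i, (2*(a i*a i + p*A i i - b i*b i - q*B i i))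
        = 2*(∑ i, a i^2) + (2*p)*(∑ i, A i i) - 2*(∑ i, b i^2) - (2*q)*(∑ i, B i i) := by
      rw [Finset.sum_congr rfl (fun i _ => show (2*(a i*a i + p*A i i - b i*b i - q*B i i))
        = 2*(a i^2) + (2*p)*(A i i) - 2*(b i^2) - (2*q)*(B i i) from by ring)]
      rw [Finset.sum_sub_distrib, Finset.sum_sub_distrib, Finset.sum_add_distrib,
        ← Finset.mul_sum, ← Finset.mul_sum, ← Finset.mul_sum, ← Finset.mul_sum]
    have e2 : ∑ i, (2*(b i*a i + a i*b i + q*A i i + p*B i i))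
        = 4*(∑ i, a i * b i) + (2*q)*(∑ i, A i i) + (2*p)*(∑ i, B i i) := by
      rw [Finset.sum_congr rfl (fun i _ => show (2*(b i*a i + a i*b i + q*A i i + p*B i i))
        = 4*(a i * b i) + (2*q)*(A i i) + (2*p)*(B i i) from by ring)]
      rw [Finset.sum_add_distrib, Finset.sum_add_distrib,
        ← Finset.mul_sum, ← Finset.mul_sum, ← Finset.mul_sum]
    rw [e1, e2]
    linear_combination (4*p*q)*hq - (4*(p^2-q^2))*hab + (2*(p^2+q^2))*hlap
  · -- infinity laplacian identity
    have inner : ∀ i, (∑ j, (2*p*a j - 2*q*b j) * (2*(a i*a j + p*A i j - b i*b j - q*B i j)))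
        = (4*p*(∑ k, a k^2))*a i + (4*q*(∑ k, a k^2))*b i
          + (4*(p^2+q^2))*(∑ j, a j * A i j) := by
      intro i
      rw [Finset.sum_congr rfl (fun j _ => show (2*p*a j - 2*q*b j) * (2*(a i*a j + p*A i j - b i*b j - q*B i j))
        = (4*p*a i)*(a j^2) + (-(4*q*a i) - 4*p*b i)*(a j * b j) + (4*q*b i)*(b j^2)
          + (4*p^2)*(a j * A i j) + (4*q^2)*(b j * B i j)
          + (-(4*p*q))*(b j * A i j) + (-(4*p*q))*(a j * B i j) from by ring)]
      rw [Finset.sum_add_distrib, Finset.sum_add_distrib, Finset.sum_add_distrib,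
        Finset.sum_add_distrib, Finset.sum_add_distrib, Finset.sum_add_distrib,
        ← Finset.mul_sum, ← Finset.mul_sum, ← Finset.mul_sum, ← Finset.mul_sum,
        ← Finset.mul_sum, ← Finset.mul_sum, ← Finset.mul_sum]
      linear_combination (-(4*q*b i))*hq + ((-(4*q*a i) - 4*p*b i))*hab
        + (4*q^2)*(h1 i).symm + (-(4*p*q))*(h2 i)
    have innerV : ∀ i, (∑ j, (2*q*a j + 2*p*b j) * (2*(b i*a j + a i*b j + q*A i j + p*B i j)))
        = (4*p*(∑ k, a k^2))*a i + (4*q*(∑ k, a k^2))*b i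
          + (4*(p^2+q^2))*(∑ j, a j * A i j) := by
      intro i
      rw [Finset.sum_congr rfl (fun j _ => show (2*q*a j + 2*p*b j) * (2*(b i*a j + a i*b j + q*A i j + p*B i j))
        = (4*q*b i)*(a j^2) + ((4*q*a i) + 4*p*b i)*(a j * b j) + (4*p*a i)*(b j^2)
          + (4*q^2)*(a j * A i j) + (4*p^2)*(b j * B i j)
          + (4*p*q)*(b j * A i j) + (4*p*q)*(a j * B i j) from by ring)]
      rw [Finset.sum_add_distrib, Finset.sum_add_distrib, Finset.sum_add_distrib,
        Finset.sum_add_distrib, Finset.sum_add_distrib, Finset.sum_add_distrib,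
        ← Finset.mul_sum, ← Finset.mul_sum, ← Finset.mul_sum, ← Finset.mul_sum,
        ← Finset.mul_sum, ← Finset.mul_sum, ← Finset.mul_sum]
      linear_combination (-(4*p*a i))*hq + ((4*q*a i) + 4*p*b i)*hab
        + (4*p^2)*(h1 i).symm + (4*p*q)*(h2 i)
    have hU : (∑ i, ∑ j, (2*p*a i - 2*q*b i) * (2*p*a j - 2*q*b j) *
        (2*(a i*a j + p*A i j - b i*b j - q*B i j)))
        = ∑ i, (2*p*a i - 2*q*b i) * ((4*p*(∑ k, a k^2))*a i + (4*q*(∑ k, a k^2))*b i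
          + (4*(p^2+q^2))*(∑ j, a j * A i j)) := by
      refine Finset.sum_congr rfl (fun i _ => ?_)
      rw [← inner i, Finset.mul_sum]
      exact Finset.sum_congr rfl (fun j _ => by ring)
    have hV : (∑ i, ∑ j, (2*q*a i + 2*p*b i) * (2*q*a j + 2*p*b j) *
        (2*(b i*a j + a i*b j + q*A i j + p*B i j)))
        = ∑ i, (2*q*a i + 2*p*b i) * ((4*p*(∑ k, a k^2))*a i + (4*q*(∑ k, a k^2))*b i
          + (4*(p^2+q^2))*(∑ j, a j * A i j)) := by
      refine Finset.sum_congr rfl (fun i _ => ?_)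
      rw [← innerV i, Finset.mul_sum]
      exact Finset.sum_congr rfl (fun j _ => by ring)
    rw [hU, hV]
    have eU : ∑ i, (2*p*a i - 2*q*b i) * ((4*p*(∑ k, a k^2))*a i + (4*q*(∑ k, a k^2))*b i
          + (4*(p^2+q^2))*(∑ j, a j * A i j))
        = (8*p^2*(∑ k, a k^2))*(∑ i, a i^2) + (0 : ℝ)*(∑ i, a i * b i)
          - (8*q^2*(∑ k, a k^2))*(∑ i, b i^2)
          + (8*p*(p^2+q^2))*(∑ i, a i * (∑ j, a j * A i j))
          - (8*q*(p^2+q^2))*(∑ i, b i * (∑ j, a j * A i j)) := by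
      rw [Finset.sum_congr rfl (fun i _ => show (2*p*a i - 2*q*b i) * ((4*p*(∑ k, a k^2))*a i + (4*q*(∑ k, a k^2))*b i + (4*(p^2+q^2))*(∑ j, a j * A i j))
        = (8*p^2*(∑ k, a k^2))*(a i^2) + (0 : ℝ)*(a i * b i)
          - (8*q^2*(∑ k, a k^2))*(b i^2) + (8*p*(p^2+q^2))*(a i * (∑ j, a j * A i j))
          - (8*q*(p^2+q^2))*(b i * (∑ j, a j * A i j)) from by ring)]
      rw [Finset.sum_sub_distrib, Finset.sum_add_distrib, Finset.sum_sub_distrib, Finset.sum_add_distrib,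
        ← Finset.mul_sum, ← Finset.mul_sum, ← Finset.mul_sum, ← Finset.mul_sum, ← Finset.mul_sum]
    have eV : ∑ i, (2*q*a i + 2*p*b i) * ((4*p*(∑ k, a k^2))*a i + (4*q*(∑ k, a k^2))*b i
          + (4*(p^2+q^2))*(∑ j, a j * A i j))
        = (8*p*q*(∑ k, a k^2))*(∑ i, a i^2) + (8*q^2*(∑ k, a k^2) + 8*p^2*(∑ k, a k^2))*(∑ i, a i * b i)
          + (8*p*q*(∑ k, a k^2))*(∑ i, b i^2)
          + (8*q*(p^2+q^2))*(∑ i, a i * (∑ j, a j * A i j))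
          + (8*p*(p^2+q^2))*(∑ i, b i * (∑ j, a j * A i j)) := by
      rw [Finset.sum_congr rfl (fun i _ => show (2*q*a i + 2*p*b i) * ((4*p*(∑ k, a k^2))*a i + (4*q*(∑ k, a k^2))*b i + (4*(p^2+q^2))*(∑ j, a j * A i j))
        = (8*p*q*(∑ k, a k^2))*(a i^2) + (8*q^2*(∑ k, a k^2) + 8*p^2*(∑ k, a k^2))*(a i * b i)
          + (8*p*q*(∑ k, a k^2))*(b i^2) + (8*q*(p^2+q^2))*(a i * (∑ j, a j * A i j))
          + (8*p*(p^2+q^2))*(b i * (∑ j, a j * A i j)) from by ring)]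
      rw [Finset.sum_add_distrib, Finset.sum_add_distrib, Finset.sum_add_distrib, Finset.sum_add_distrib,
        ← Finset.mul_sum, ← Finset.mul_sum, ← Finset.mul_sum, ← Finset.mul_sum, ← Finset.mul_sum]
    rw [eU, eV]
    have hP : (∑ i, ∑ j, a i * a j * A i j) = ∑ i, a i * (∑ j, a j * A i j) := by
      refine Finset.sum_congr rfl (fun i _ => ?_)
      rw [Finset.mul_sum]
      exact Finset.sum_congr rfl (fun j _ => by ring)
    have hS : (∑ i, ∑ j, b i * b j * B i j) = ∑ i, b i * (∑ j, a j * A i j) := by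
      refine Finset.sum_congr rfl (fun i _ => ?_)
      rw [h1 i, Finset.mul_sum]
      exact Finset.sum_congr rfl (fun j _ => by ring)
    rw [hP, hS] at hinf
    linear_combination (8*p*q*(p^2+q^2)*(∑ k, a k^2))*hq
      - (8*(p^2-q^2)*(p^2+q^2)*(∑ k, a k^2))*hab + (8*(p^2+q^2)^2)*hinf
  · -- gradients equal
    rw [Finset.sum_congr rfl (fun i _ => show (2*p*a i - 2*q*b i)^2
      = (4*p^2)*(a i^2) + (-(8*p*q))*(a i*b i) + (4*q^2)*(b i^2) from by ring),
      Finset.sum_congr (rfl : (Finset.univ : Finset (Fin N)) = Finset.univ) (fun i _ => show (2*q*a i + 2*p*b i)^2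
      = (4*q^2)*(a i^2) + (8*p*q)*(a i*b i) + (4*p^2)*(b i^2) from by ring)]
    rw [Finset.sum_add_distrib, Finset.sum_add_distrib, Finset.sum_add_distrib, Finset.sum_add_distrib,
      ← Finset.mul_sum, ← Finset.mul_sum, ← Finset.mul_sum, ← Finset.mul_sum, ← Finset.mul_sum, ← Finset.mul_sum]
    linear_combination (4*p^2 - 4*q^2)*hq + (-(16*p*q))*hab
  · rw [Finset.sum_congr rfl (fun i _ => show (2*p*a i - 2*q*b i) * (2*q*a i + 2*p*b i)
      = (4*p*q)*(a i^2) + (4*p^2 - 4*q^2)*(a i*b i) + (-(4*p*q))*(b i^2) from by ring)]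
    rw [Finset.sum_add_distrib, Finset.sum_add_distrib,
      ← Finset.mul_sum, ← Finset.mul_sum, ← Finset.mul_sum]
    linear_combination (4*p*q)*hq + (4*p^2 - 4*q^2)*hab

/-- If `(u, v)` are orthogonal twin-harmonics on an open `Ω ⊆ ℝ^N`, then so are
`(u² − v², 2uv)`. -/
theorem twinHarmonics_square {N : ℕ}
    (Ω : Set (Fin N → ℝ)) (hΩ : IsOpen Ω)
    (u v : (Fin N → ℝ) → ℝ)
    (huv : TwinHarmonics u v Ω) :
    TwinHarmonics (fun x => u x ^ 2 - v x ^ 2) (fun x => 2 * u x * v x) Ω := by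
  obtain ⟨hu, hv, h⟩ := huv
  refine ⟨(hu.pow 2).sub (hv.pow 2), (contDiffOn_const.mul hu).mul hv, fun x hx => ?_⟩
  obtain ⟨hlap, hinf, hq, hab⟩ := h x hx
  have hgrad : ∀ y ∈ Ω, (∑ k, pd u k y ^ 2) = ∑ k, pd v k y ^ 2 := fun y hy => (h y hy).2.2.1
  have hortho : ∀ y ∈ Ω, (∑ k, pd u k y * pd v k y) = 0 := fun y hy => (h y hy).2.2.2
  obtain ⟨c1, c2, c3, c4⟩ := alg_main (fun i => pd u i x) (fun i => pd v i x)
    (fun i j => pd (pd u j) i x) (fun i j => pd (pd v j) i x) (u x) (v x)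
    hq hab (fun i => E_hd1 hΩ hu hv hgrad x hx i) (fun i => E_hd2 hΩ hu hv hortho x hx i)
    hlap hinf
  refine ⟨?_, ?_, ?_, ?_⟩
  · show 2 * u x * v x * lap (fun y => u y ^ 2 - v y ^ 2) x
      = (u x ^ 2 - v x ^ 2) * lap (fun y => 2 * u y * v y) x
    have eL : lap (fun y => u y ^ 2 - v y ^ 2) x
        = ∑ i, (2*(pd u i x * pd u i x + u x * pd (pd u i) i x
            - pd v i x * pd v i x - v x * pd (pd v i) i x)) :=
      Finset.sum_congr rfl fun i _ => E_pdpdU hΩ hu hv x hx i i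
    have eLV : lap (fun y => 2 * u y * v y) x
        = ∑ i, (2*(pd v i x * pd u i x + pd u i x * pd v i x
            + v x * pd (pd u i) i x + u x * pd (pd v i) i x)) :=
      Finset.sum_congr rfl fun i _ => E_pdpdV hΩ hu hv x hx i i
    rw [eL, eLV]
    exact c1
  · show 2 * u x * v x * infLap (fun y => u y ^ 2 - v y ^ 2) x
      = (u x ^ 2 - v x ^ 2) * infLap (fun y => 2 * u y * v y) x
    have eI : infLap (fun y => u y ^ 2 - v y ^ 2) x
        = ∑ i, ∑ j, (2*u x*pd u i x - 2*v x*pd v i x) * (2*u x*pd u j x - 2*v x*pd v j x)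
            * (2*(pd u i x * pd u j x + u x * pd (pd u j) i x
              - pd v i x * pd v j x - v x * pd (pd v j) i x)) :=
      Finset.sum_congr rfl fun i _ => Finset.sum_congr rfl fun j _ => by
        rw [E_pdU hΩ hu hv x hx i, E_pdU hΩ hu hv x hx j, E_pdpdU hΩ hu hv x hx i j]
    have eIV : infLap (fun y => 2 * u y * v y) x
        = ∑ i, ∑ j, (2*v x*pd u i x + 2*u x*pd v i x) * (2*v x*pd u j x + 2*u x*pd v j x)
            * (2*(pd v i x * pd u j x + pd u i x * pd v j x
              + v x * pd (pd u j) i x + u x * pd (pd v j) i x)) :=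
      Finset.sum_congr rfl fun i _ => Finset.sum_congr rfl fun j _ => by
        rw [E_pdV hΩ hu hv x hx i, E_pdV hΩ hu hv x hx j, E_pdpdV hΩ hu hv x hx i j]
    rw [eI, eIV]
    exact c2
  · show (∑ i, pd (fun y => u y ^ 2 - v y ^ 2) i x ^ 2)
      = ∑ i, pd (fun y => 2 * u y * v y) i x ^ 2
    rw [Finset.sum_congr rfl (fun i _ => show pd (fun y => u y ^ 2 - v y ^ 2) i x ^ 2
        = (2*u x*pd u i x - 2*v x*pd v i x)^2 from by rw [E_pdU hΩ hu hv x hx i]),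
      Finset.sum_congr (rfl : (Finset.univ : Finset (Fin N)) = Finset.univ)
        (fun i _ => show pd (fun y => 2 * u y * v y) i x ^ 2
        = (2*v x*pd u i x + 2*u x*pd v i x)^2 from by rw [E_pdV hΩ hu hv x hx i])]
    exact c3
  · show (∑ i, pd (fun y => u y ^ 2 - v y ^ 2) i x * pd (fun y => 2 * u y * v y) i x) = 0
    rw [Finset.sum_congr rfl (fun i _ =>
      show pd (fun y => u y ^ 2 - v y ^ 2) i x * pd (fun y => 2 * u y * v y) i x
        = (2*u x*pd u i x - 2*v x*pd v i x) * (2*v x*pd u i x + 2*u x*pd v i x) from by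
          rw [E_pdU hΩ hu hv x hx i, E_pdV hΩ hu hv x hx i])]
    exact c4

end
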